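/- Let G be a locally compact group and A a compact automorphism group of G acting continuously. Let X = (x_i)_{i ∈ I} be a family in G that is relatively separated with respect to A, i.e., for every compact W ⊂ G, sup_{j} #{i : A(x_i W) ∩ A(x_j W) ≠ ∅} < ∞, where A(S) = {α(s) : α ∈ A, s ∈ S}. Then for any compact set K = K^{-1} = A(K) there is a finite partition I = I_1 ∪ ⋯ ∪ I_s such that each subfamily (x_i)_{i ∈ I_r} is K-A-separated, meaning A(x_i K) ∩ A(x_j K) = ∅ for all i ≠ j in I_r. -/

import Mathlib

open Pointwise
/-- The `A`-orbit `A(S) = {α(s) : α ∈ A, s ∈ S}` of a set `S ⊆ G` under an automorphism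
group action `φ : K →* MulAut G`. -/
def orbitSet {G K : Type*} [Group G] [Group K] (φ : K →* MulAut G) (S : Set G) : Set G :=
  ⋃ k : K, (φ k) '' S

/-- Greedy coloring on a finite set of vertices: if every vertex has at most `M`
`R`-neighbors, then any finite set can be properly colored with `M + 1` colors. -/
lemma greedy_coloring {V : Type*} (R : V → V → Prop) (hsymm : Symmetric R) (M : ℕ)
    (hfin : ∀ j, ∃ hf : {i | R i j}.Finite, hf.toFinset.card ≤ M) :
    ∀ S : Finset V, ∃ c : V → Fin (M + 1),
      ∀ i ∈ S, ∀ j ∈ S, i ≠ j → R i j → c i ≠ c j := by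
  classical
  intro S
  induction S using Finset.induction with
  | empty => exact ⟨fun _ => 0, by simp⟩
  | @insert v S hv ih =>
    obtain ⟨c, hc⟩ := ih
    obtain ⟨hf, hcard⟩ := hfin v
    -- colors used by neighbors of `v` inside `S`
    set T : Finset (Fin (M + 1)) := (hf.toFinset.filter (· ∈ S)).image c with hT
    have hTcard : T.card ≤ M := by
      calc T.card ≤ (hf.toFinset.filter (· ∈ S)).card := Finset.card_image_le
        _ ≤ hf.toFinset.card := Finset.card_filter_le _ _
        _ ≤ M := hcard
    have ha : ∃ a : Fin (M + 1), a ∉ T := by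
      by_contra h
      push_neg at h
      have hsub : (Finset.univ : Finset (Fin (M + 1))) ⊆ T := fun a _ => h a
      have := Finset.card_le_card hsub
      simp [Finset.card_univ] at this
      omega
    obtain ⟨a, ha⟩ := ha
    refine ⟨Function.update c v a, ?_⟩
    intro i hi j hj hij hR
    rcases Finset.mem_insert.mp hi with rfl | hiS
    · rcases Finset.mem_insert.mp hj with rfl | hjS
      · exact absurd rfl hij
      · have hjv : j ≠ i := fun h => hij h.symm
        simp only [Function.update_self, Function.update_of_ne hjv]
        intro h
        exact ha (Finset.mem_image.mpr ⟨j, Finset.mem_filter.mpr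
          ⟨hf.mem_toFinset.mpr (hsymm hR), hjS⟩, h.symm⟩)
    · rcases Finset.mem_insert.mp hj with rfl | hjS
      · simp only [Function.update_self, Function.update_of_ne hij]
        intro h
        exact ha (Finset.mem_image.mpr ⟨i, Finset.mem_filter.mpr
          ⟨hf.mem_toFinset.mpr hR, hiS⟩, h⟩)
      · have hiv : i ≠ v := fun h => hv (h ▸ hiS)
        have hjv : j ≠ v := fun h => hv (h ▸ hjS)
        simpa [Function.update_of_ne hiv, Function.update_of_ne hjv] using
          hc i hiS j hjS hij hR

/-- De Bruijn–Erdős style coloring: a symmetric relation with all neighbor sets of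
cardinality at most `M` admits a proper `(M+1)`-coloring of the whole vertex set. -/
lemma exists_coloring_of_rel {V : Type*} (R : V → V → Prop) (hsymm : Symmetric R) (M : ℕ)
    (hfin : ∀ j, ∃ hf : {i | R i j}.Finite, hf.toFinset.card ≤ M) :
    ∃ P : V → Fin (M + 1), ∀ i j, i ≠ j → R i j → P i ≠ P j := by
  classical
  let Grf : SimpleGraph V :=
    { Adj := fun i j => i ≠ j ∧ R i j
      symm := ⟨fun i j ⟨h1, h2⟩ => ⟨h1.symm, hsymm h2⟩⟩
      loopless := ⟨fun i ⟨h1, _⟩ => h1 rfl⟩ }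
  have key : Nonempty (Grf →g SimpleGraph.completeGraph (Fin (M + 1))) := by
    apply SimpleGraph.nonempty_hom_of_forall_finite_subgraph_hom
    intro G' hG'
    have hgc := greedy_coloring R hsymm M hfin hG'.toFinset
    set c := hgc.choose with hcdef
    have hc := hgc.choose_spec
    refine ⟨fun v => c v.1, ?_⟩
    rintro ⟨u, hu⟩ ⟨w, hw⟩ huw
    have hadj : Grf.Adj u w := G'.adj_sub huw
    exact hc u (hG'.mem_toFinset.mpr hu) w (hG'.mem_toFinset.mpr hw) hadj.1 hadj.2
  obtain ⟨f⟩ := key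
  exact ⟨f, fun i j hij hR => f.map_rel ⟨hij, hR⟩⟩

/-- Let `G` be a locally compact group and `K` a compact group acting
continuously on `G` by automorphisms. If `X = (x_i)_{i∈I}` is relatively separated with
respect to the action (for every compact `W`, each orbit `A(x_j W)` meets at most `M` of
the orbits `A(x_i W)`), then for every compact `K₀ = K₀⁻¹ = A(K₀)` there is a finite
partition `I = I_1 ∪ ⋯ ∪ I_s` (a coloring `P : I → Fin s`) such that each subfamily is
`K₀`-`A`-separated: `A(x_i K₀) ∩ A(x_j K₀) = ∅` for `i ≠ j` of the same color. -/
theorem relatively_separated_partition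
    {G : Type*} [Group G] [TopologicalSpace G] [IsTopologicalGroup G] [LocallyCompactSpace G]
    {K : Type*} [Group K] [TopologicalSpace K] [IsTopologicalGroup K] [CompactSpace K]
    (φ : K →* MulAut G) (hcont : Continuous fun p : G × K => φ p.2 p.1)
    {I : Type*} (X : I → G)
    (hsep : ∀ W : Set G, IsCompact W → ∃ M : ℕ, ∀ j : I,
      ∃ hfin : {i : I | (orbitSet φ (X i • W) ∩ orbitSet φ (X j • W)).Nonempty}.Finite,
        hfin.toFinset.card ≤ M) :
    ∀ K₀ : Set G, IsCompact K₀ → K₀⁻¹ = K₀ → orbitSet φ K₀ = K₀ →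
      ∃ (s : ℕ) (P : I → Fin s), ∀ i j : I, i ≠ j → P i = P j →
        orbitSet φ (X i • K₀) ∩ orbitSet φ (X j • K₀) = ∅ := by
  intro K₀ hK₀ _ _
  obtain ⟨M, hM⟩ := hsep K₀ hK₀
  set R : I → I → Prop :=
    fun i j => (orbitSet φ (X i • K₀) ∩ orbitSet φ (X j • K₀)).Nonempty with hR
  have hsymm : Symmetric R := fun i j ⟨x, hx⟩ => ⟨x, hx.2, hx.1⟩
  obtain ⟨P, hP⟩ := exists_coloring_of_rel R hsymm M hM
  exact ⟨M + 1, P, fun i j hij hPij => by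
    by_contra h
    exact hP i j hij (Set.nonempty_iff_ne_empty.mpr h) hPij⟩
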